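/- Let H be a separable analytic reproducing kernel Hilbert space of E-valued functions on 𝔻 on which the multiplication operator M_z is bounded, and let E₀ be a subset of E whose linear span is dense in E. If for every η ∈ E₀ one has (1/(n!)²)‖K_{n,η}‖²_H → 0 as n → ∞, then M_z* is topologically mixing on H. -/

import Mathlib

open Metric Filter ContinuousLinearMap

open scoped InnerProductSpace

private lemma iterWithin_eq_iter {F : Type*} [NormedAddCommGroup F] [NormedSpace ℂ F]
    {f : ℂ → F} {s : Set ℂ} (hs : IsOpen s) {x : ℂ} (hx : x ∈ s) (n : ℕ) :
    iteratedDerivWithin n f s x = iteratedDeriv n f x := by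
  rw [iteratedDerivWithin, iteratedDeriv, iteratedFDerivWithin_of_isOpen n hs hx]

private lemma key_deriv {F : Type*} [NormedAddCommGroup F] [NormedSpace ℂ F] [CompleteSpace F]
    {g : ℂ → F} {s : Set ℂ} (hs : IsOpen s) (hg : DifferentiableOn ℂ g s) (n : ℕ) :
    ∀ z ∈ s, iteratedDerivWithin (n + 1) (fun w => w • g w) s z
      = ((n : ℂ) + 1) • iteratedDerivWithin n g s z
        + z • iteratedDerivWithin (n + 1) g s z := by
  have hu : UniqueDiffOn ℂ s := hs.uniqueDiffOn
  have hcd : ContDiffOn ℂ ⊤ g s := (hg.analyticOnNhd hs).contDiffOn hu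
  have hder : ∀ (k : ℕ), ∀ z ∈ s, HasDerivWithinAt (iteratedDerivWithin k g s)
      (iteratedDerivWithin (k + 1) g s z) s z := by
    intro k z hz
    have hd := (hcd.differentiableOn_iteratedDerivWithin (m := k)
      (by exact lt_top_iff_ne_top.2 (by simp)) hu) z hz
    have := hd.hasDerivWithinAt
    rwa [← iteratedDerivWithin_succ] at this
  induction n with
  | zero =>
    intro z hz
    have h1 : HasDerivWithinAt (fun w => w • g w)
        (z • iteratedDerivWithin 1 g s z + (1 : ℂ) • g z) s z := by
      have := (hasDerivWithinAt_id z s).smul (by simpa only [iteratedDerivWithin_zero] using hder 0 z hz)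
      simp only [one_smul, zero_add, iteratedDerivWithin_one, id] at this ⊢
      exact this
    rw [iteratedDerivWithin_one, h1.derivWithin (hu z hz)]
    simp only [iteratedDerivWithin_zero, Nat.cast_zero, one_smul, zero_add]
    abel
  | succ n ih =>
    intro z hz
    have e1 : iteratedDerivWithin (n + 2) (fun w => w • g w) s z
        = derivWithin (iteratedDerivWithin (n + 1) (fun w => w • g w) s) s z :=
      congrFun iteratedDerivWithin_succ z
    have e2 : derivWithin (iteratedDerivWithin (n + 1) (fun w => w • g w) s) s z
        = derivWithin (fun w => ((n : ℂ) + 1) • iteratedDerivWithin n g s w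
            + w • iteratedDerivWithin (n + 1) g s w) s z :=
      derivWithin_congr (fun w hw => ih w hw) (ih z hz)
    have h2 : HasDerivWithinAt (fun w => ((n : ℂ) + 1) • iteratedDerivWithin n g s w
        + w • iteratedDerivWithin (n + 1) g s w)
        (((n : ℂ) + 1) • iteratedDerivWithin (n + 1) g s z
          + (z • iteratedDerivWithin (n + 2) g s z
            + (1 : ℂ) • iteratedDerivWithin (n + 1) g s z)) s z :=
      ((hder n z hz).const_smul _).add
        ((hasDerivWithinAt_id z s).smul (hder (n + 1) z hz))
    rw [e1, e2, h2.derivWithin (hu z hz)]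
    push_cast
    module

/-- Theorem (mixing part): Let `H` be a separable analytic reproducing kernel Hilbert
space of `E`-valued functions on the unit disc on which `M_z` is bounded, and let
`E₀ ⊆ E` have dense linear span. If `(1/(n!)²)‖K_{n,η}‖² → 0` as `n → ∞` for every
`η ∈ E₀`, then `M_z*` is topologically mixing. -/
theorem stmt7 {H E : Type*}
    [NormedAddCommGroup H] [InnerProductSpace ℂ H] [CompleteSpace H]
    [TopologicalSpace.SeparableSpace H]
    [NormedAddCommGroup E] [InnerProductSpace ℂ E] [CompleteSpace E]
    (ι : H →ₗ[ℂ] (ℂ → E))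
    (hinj : ∀ f g : H, Set.EqOn (ι f) (ι g) (ball (0 : ℂ) 1) → f = g)
    (hanal : ∀ f : H, DifferentiableOn ℂ (ι f) (ball (0 : ℂ) 1))
    (heval : ∀ w ∈ ball (0 : ℂ) 1, Continuous fun f : H => ι f w)
    (Mz : H →L[ℂ] H)
    (hMz : ∀ f : H, ∀ w ∈ ball (0 : ℂ) 1, ι (Mz f) w = w • ι f w)
    (K : ℕ → E → H)
    (hK : ∀ (n : ℕ) (η : E) (f : H),
      (inner ℂ f (K n η) : ℂ) =
        (inner ℂ (iteratedDerivWithin n (ι f) (ball (0 : ℂ) 1) 0) η : ℂ))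
    (E₀ : Set E)
    (hE₀ : Dense ((Submodule.span ℂ E₀ : Submodule ℂ E) : Set E))
    (hlim : ∀ η ∈ E₀,
      Tendsto (fun n : ℕ => (1 / (n.factorial : ℝ) ^ 2) * ‖K n η‖ ^ 2) atTop (nhds 0)) :
    ∀ U V : Set H, IsOpen U → IsOpen V → U.Nonempty → V.Nonempty →
      ∃ N : ℕ, ∀ j ≥ N, ((((adjoint Mz) ^ j) ⁻¹' U) ∩ V).Nonempty := by
  set s : Set ℂ := ball (0 : ℂ) 1 with hs_def
  have hs : IsOpen s := isOpen_ball
  have h0 : (0 : ℂ) ∈ s := mem_ball_self one_pos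
  have hu : UniqueDiffOn ℂ s := hs.uniqueDiffOn
  set T : H →L[ℂ] H := adjoint Mz with hT_def
  -- action of T on kernels
  have hTK : ∀ (n : ℕ) (η : E), T (K (n + 1) η) = ((n : ℂ) + 1) • K n η := by
    intro n η
    apply ext_inner_left ℂ
    intro f
    rw [hT_def, adjoint_inner_right, hK, inner_smul_right, hK]
    have hEq : Set.EqOn (ι (Mz f)) (fun w => w • ι f w) s := fun w hw => hMz f w hw
    rw [iteratedDerivWithin_congr hEq h0, key_deriv hs (hanal f) n 0 h0]
    simp [inner_add_left, inner_smul_left]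
    ring
  have hTK0 : ∀ η : E, T (K 0 η) = 0 := by
    intro η
    apply ext_inner_left ℂ
    intro f
    rw [hT_def, adjoint_inner_right, hK]
    have : ι (Mz f) 0 = 0 := by rw [hMz f 0 h0, zero_smul]
    simp [this]
  -- iterated action
  have hTpow : ∀ (j n : ℕ) (η : E),
      (T ^ j) (K (n + j) η) = (((n + j).factorial : ℂ) / (n.factorial : ℂ)) • K n η := by
    intro j
    induction j with
    | zero =>
      intro n η
      simp [div_self (a := ((n.factorial : ℂ))) (by exact_mod_cast n.factorial_ne_zero)]
    | succ j ih =>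
      intro n η
      have e : n + (j + 1) = (n + j) + 1 := by ring
      rw [pow_succ, ContinuousLinearMap.mul_apply, e, hTK (n + j) η, map_smul, ih n η,
        smul_smul]
      congr 1
      have h1 : ((n + j + 1).factorial : ℂ) = ((n + j : ℕ) + 1) * ((n + j).factorial : ℂ) := by
        rw [Nat.factorial_succ]; push_cast; ring
      rw [h1]
      have h2 : (n.factorial : ℂ) ≠ 0 := by exact_mod_cast n.factorial_ne_zero
      field_simp
  have hTzero : ∀ (n : ℕ) (η : E), (T ^ (n + 1)) (K n η) = 0 := by
    intro n
    induction n with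
    | zero => intro η; simpa using hTK0 η
    | succ n ih =>
      intro η
      rw [pow_succ, ContinuousLinearMap.mul_apply, hTK n η, map_smul, ih η, smul_zero]
  have hTzero' : ∀ (n : ℕ) (η : E) (j : ℕ), n < j → (T ^ j) (K n η) = 0 := by
    intro n η j hj
    obtain ⟨k, rfl⟩ := Nat.exists_eq_add_of_le (Nat.succ_le_of_lt hj)
    rw [add_comm, pow_add, ContinuousLinearMap.mul_apply, hTzero n η, map_zero]
  -- the span of kernels with η ∈ E₀ is dense
  set S : Set H := {x | ∃ n : ℕ, ∃ η ∈ E₀, x = K n η} with hS_def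
  have horth : (Submodule.span ℂ S)ᗮ = ⊥ := by
    rw [Submodule.eq_bot_iff]
    intro f hf
    have hgen : ∀ (n : ℕ), ∀ η ∈ E₀, (inner ℂ (K n η) f : ℂ) = 0 := by
      intro n η hη
      exact ((Submodule.mem_orthogonal _ f).1 hf) _ (Submodule.subset_span ⟨n, η, hη, rfl⟩)
    have hvanish : ∀ n : ℕ, iteratedDerivWithin n (ι f) s 0 = 0 := by
      intro n
      set v := iteratedDerivWithin n (ι f) s 0 with hv_def
      have hv : ∀ η ∈ E₀, (inner ℂ v η : ℂ) = 0 := by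
        intro η hη
        have h2 : (inner ℂ f (K n η) : ℂ) = 0 := by
          rw [← inner_conj_symm, hgen n η hη, map_zero]
        rw [hK] at h2
        exact h2
      have hspan : ∀ η ∈ (Submodule.span ℂ E₀ : Submodule ℂ E), (inner ℂ v η : ℂ) = 0 := by
        intro η hη
        induction hη using Submodule.span_induction with
        | mem a ha => exact hv a ha
        | zero => simp
        | add a b _ _ iha ihb => rw [inner_add_right, iha, ihb, add_zero]
        | smul c a _ iha => rw [inner_smul_right, iha, mul_zero]
      have hc : Continuous fun η : E => (inner ℂ v η : ℂ) :=
        continuous_const.inner continuous_id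
      have heq : (fun η : E => (inner ℂ v η : ℂ)) = fun _ => (0 : ℂ) :=
        Continuous.ext_on hE₀ hc continuous_const (fun η hη => hspan η hη)
      exact inner_self_eq_zero.1 (congrFun heq v)
    refine hinj f 0 ?_
    intro z hz
    have hsum := Complex.hasSum_taylorSeries_on_ball (hanal f) hz
    have hzero : ∀ n : ℕ, iteratedDeriv n (ι f) 0 = 0 := by
      intro n
      rw [← iterWithin_eq_iter hs h0]
      exact hvanish n
    simp only [hzero, smul_zero] at hsum
    have h1 : ι f z = 0 := hsum.unique hasSum_zero
    simpa [map_zero] using h1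
  have hdense : Dense ((Submodule.span ℂ S : Submodule ℂ H) : Set H) := by
    have h2 := Submodule.topologicalClosure_eq_top_iff.mpr horth
    rw [dense_iff_closure_eq, ← Submodule.topologicalClosure_coe, h2]
    rfl
  -- right inverses tending to zero
  have hP : ∀ y ∈ Submodule.span ℂ S, ∃ u : ℕ → H,
      Tendsto u atTop (nhds 0) ∧ ∀ j, (T ^ j) (u j) = y := by
    intro y hy
    induction hy using Submodule.span_induction with
    | mem x hx =>
      obtain ⟨n, η, hη, rfl⟩ := hx
      refine ⟨fun j => ((n.factorial : ℂ) / (((n + j).factorial : ℂ))) • K (n + j) η, ?_, ?_⟩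
      · rw [tendsto_zero_iff_norm_tendsto_zero]
        have h2 : Tendsto (fun m : ℕ => (1 / (m.factorial : ℝ)) * ‖K m η‖) atTop (nhds 0) := by
          have h3 := (hlim η hη).sqrt
          rw [Real.sqrt_zero] at h3
          refine h3.congr fun m => ?_
          rw [show (1 / (m.factorial : ℝ) ^ 2) * ‖K m η‖ ^ 2
              = ((1 / (m.factorial : ℝ)) * ‖K m η‖) ^ 2 by ring,
            Real.sqrt_sq (by positivity)]
        have h5 : Tendsto (fun j : ℕ => (1 / (((n + j).factorial : ℝ))) * ‖K (n + j) η‖)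
            atTop (nhds 0) := by
          have := h2.comp (Filter.tendsto_add_atTop_nat n)
          simpa [Function.comp_def, add_comm] using this
        have h6 := h5.const_mul (n.factorial : ℝ)
        rw [mul_zero] at h6
        refine h6.congr fun j => ?_
        rw [norm_smul]
        have : ‖((n.factorial : ℂ) / (((n + j).factorial : ℂ)))‖
            = (n.factorial : ℝ) / (((n + j).factorial : ℝ)) := by
          rw [norm_div]
          simp
        rw [this]
        ring
      · intro j
        rw [map_smul, hTpow j n η, smul_smul]
        have h2 : (n.factorial : ℂ) ≠ 0 := by exact_mod_cast n.factorial_ne_zero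
        have h3 : (((n + j).factorial : ℂ)) ≠ 0 := by exact_mod_cast (n + j).factorial_ne_zero
        rw [show ((n.factorial : ℂ) / (((n + j).factorial : ℂ)))
            * ((((n + j).factorial : ℂ)) / (n.factorial : ℂ)) = 1 by field_simp, one_smul]
    | zero => exact ⟨0, tendsto_const_nhds, fun j => by simp⟩
    | add x y hx hy ihx ihy =>
      obtain ⟨u, hu1, hu2⟩ := ihx
      obtain ⟨v, hv1, hv2⟩ := ihy
      exact ⟨u + v, by simpa using (show Tendsto (u + v) atTop (nhds (0 + 0)) from hu1.add hv1),
        fun j => by simp [Pi.add_apply, map_add, hu2 j, hv2 j]⟩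
    | smul c x hx ihx =>
      obtain ⟨u, hu1, hu2⟩ := ihx
      exact ⟨fun j => c • u j, by simpa using hu1.const_smul c,
        fun j => by rw [map_smul, hu2 j]⟩
  -- T^j eventually kills span elements
  have hQ : ∀ x ∈ Submodule.span ℂ S, ∃ N : ℕ, ∀ j, N ≤ j → (T ^ j) x = 0 := by
    intro x hx
    induction hx using Submodule.span_induction with
    | mem x hx =>
      obtain ⟨n, η, hη, rfl⟩ := hx
      exact ⟨n + 1, fun j hj => hTzero' n η j (Nat.lt_of_succ_le hj)⟩
    | zero => exact ⟨0, fun j _ => by simp⟩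
    | add x y hx hy ihx ihy =>
      obtain ⟨N₁, h1⟩ := ihx
      obtain ⟨N₂, h2⟩ := ihy
      exact ⟨max N₁ N₂, fun j hj => by
        rw [map_add, h1 j (le_trans (le_max_left _ _) hj),
          h2 j (le_trans (le_max_right _ _) hj), add_zero]⟩
    | smul c x hx ihx =>
      obtain ⟨N, h1⟩ := ihx
      exact ⟨N, fun j hj => by rw [map_smul, h1 j hj, smul_zero]⟩
  -- conclusion
  intro U V hU hV hUne hVne
  obtain ⟨y, hyU, hyD⟩ := hdense.inter_open_nonempty U hU hUne
  obtain ⟨x, hxV, hxD⟩ := hdense.inter_open_nonempty V hV hVne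
  obtain ⟨u, hu0, huT⟩ := hP y hyD
  obtain ⟨N₁, hN₁⟩ := hQ x hxD
  have hv : Tendsto (fun j => x + u j) atTop (nhds x) := by
    have := tendsto_const_nhds (x := x) (f := atTop (α := ℕ)) |>.add hu0
    simpa using this
  have hev : ∀ᶠ j in atTop, x + u j ∈ V := hv.eventually (hV.eventually_mem hxV)
  obtain ⟨N₂, hN₂⟩ := eventually_atTop.1 hev
  refine ⟨max N₁ N₂, fun j hj => ?_⟩
  refine ⟨x + u j, ?_, hN₂ j (le_trans (le_max_right _ _) hj)⟩
  show (T ^ j) (x + u j) ∈ U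
  rw [map_add, hN₁ j (le_trans (le_max_left _ _) hj), huT j, zero_add]
  exact hyU
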